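/- Let K, C : ℝ → ℝ be continuous with K t < 0 for all t, and let f : ℝ → ℝ satisfy f'' - C·f' + K·f = 0 with f 0 = 0 and f' 0 = -1. Then f'(t) ≠ 0 for all t ∈ ℝ. -/

import Mathlib

open Topology Filter

lemma finsler_aux (K C f : ℝ → ℝ) (hKneg : ∀ t, K t < 0)
    (hf : ContDiff ℝ 2 f)
    (hode : ∀ t, deriv (deriv f) t - C t * deriv f t + K t * f t = 0)
    (h0 : f 0 = 0) (h0' : deriv f 0 = -1) :
    ∀ t, 0 ≤ t → deriv f t ≠ 0 := by
  have hf1 : ContDiff ℝ 1 (deriv f) := by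
    have := (contDiff_succ_iff_deriv (n := 1)).mp (by exact_mod_cast hf)
    exact this.2.2
  have hdfc : Continuous (deriv f) := hf1.continuous
  have hdfd : Differentiable ℝ (deriv f) := hf1.differentiable (by norm_num)
  by_contra h
  push_neg at h
  obtain ⟨t₀, ht₀, hz⟩ := h
  set S : Set ℝ := {t | 0 ≤ t ∧ deriv f t = 0} with hS
  have hSne : S.Nonempty := ⟨t₀, ht₀, hz⟩
  have hSbdd : BddBelow S := ⟨0, fun x hx => hx.1⟩
  have hSclosed : IsClosed S := by
    have : S = Set.Ici 0 ∩ (deriv f) ⁻¹' {0} := by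
      ext x; simp [hS, Set.mem_setOf_eq]
    rw [this]
    exact isClosed_Ici.inter (isClosed_singleton.preimage hdfc)
  set t₁ := sInf S with ht₁
  have ht₁S : t₁ ∈ S := hSclosed.csInf_mem hSne hSbdd
  have ht₁pos : 0 < t₁ := by
    rcases lt_or_eq_of_le ht₁S.1 with h | h
    · exact h
    · exfalso; have := ht₁S.2; rw [← h] at this; rw [h0'] at this; norm_num at this
  -- f' < 0 on [0, t₁)
  have hneg : ∀ t ∈ Set.Ico (0:ℝ) t₁, deriv f t < 0 := by
    intro t ht
    by_contra hge
    push_neg at hge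
    rcases lt_or_eq_of_le hge with hpos | heq
    · -- f'(0) = -1 < 0 < f'(t): IVT gives a zero in [0,t]
      have h0t : (0:ℝ) ≤ t := ht.1
      have := intermediate_value_Icc h0t hdfc.continuousOn
      have h0mem : (0:ℝ) ∈ Set.Icc (deriv f 0) (deriv f t) := by
        rw [h0']; constructor <;> [linarith; linarith]
      obtain ⟨s, hs, hsz⟩ := this h0mem
      have : s ∈ S := ⟨hs.1, hsz⟩
      have := csInf_le hSbdd this
      linarith [ht.2, hs.2]
    · have : t ∈ S := ⟨ht.1, heq.symm⟩
      have := csInf_le hSbdd this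
      linarith [ht.2]
  -- f is strictly decreasing on [0, t₁], so f t₁ < 0
  have hanti : StrictAntiOn f (Set.Icc 0 t₁) := by
    apply strictAntiOn_of_deriv_neg (convex_Icc 0 t₁)
      (hf.continuous.continuousOn)
    intro x hx
    rw [interior_Icc] at hx
    exact hneg x ⟨le_of_lt hx.1, hx.2⟩
  have hft₁ : f t₁ < 0 := by
    have := hanti (Set.left_mem_Icc.mpr ht₁pos.le) (Set.right_mem_Icc.mpr ht₁pos.le) ht₁pos
    rwa [h0] at this
  -- f''(t₁) < 0
  have hode₁ := hode t₁
  rw [ht₁S.2] at hode₁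
  have hfpp : deriv (deriv f) t₁ < 0 := by
    have : deriv (deriv f) t₁ = -(K t₁ * f t₁) := by linarith
    rw [this]
    have : 0 < K t₁ * f t₁ := mul_pos_of_neg_of_neg (hKneg t₁) hft₁
    linarith
  -- slope argument: for t slightly below t₁, f' t > 0, contradiction
  have hder : HasDerivAt (deriv f) (deriv (deriv f) t₁) t₁ := (hdfd t₁).hasDerivAt
  have hslope := hasDerivAt_iff_tendsto_slope.mp hder
  have hle : 𝓝[<] t₁ ≤ 𝓝[≠] t₁ := nhdsWithin_mono _ (fun x hx => ne_of_lt hx)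
  have hev1 : ∀ᶠ x in 𝓝[<] t₁, slope (deriv f) t₁ x < 0 :=
    (hslope.mono_left hle).eventually (eventually_lt_nhds hfpp)
  have hev2 : ∀ᶠ x in 𝓝[<] t₁, x ∈ Set.Ioo (0:ℝ) t₁ :=
    Filter.eventually_iff.mpr (Ioo_mem_nhdsLT ht₁pos)
  obtain ⟨x, hx1, hx2⟩ := (hev1.and hev2).exists
  have hsl : slope (deriv f) t₁ x = deriv f x / (x - t₁) := by
    rw [slope_def_field, ht₁S.2]
    ring
  rw [hsl] at hx1
  have hxneg : x - t₁ < 0 := by linarith [hx2.2]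
  have : 0 < deriv f x := by
    rcases div_neg_iff.mp hx1 with ⟨h1, h2⟩ | ⟨h1, h2⟩
    · exact h1
    · linarith
  have := hneg x ⟨hx2.1.le, hx2.2⟩
  linarith

theorem finsler_jacobi_deriv_ne_zero (K C f : ℝ → ℝ)
    (hK : Continuous K) (hC : Continuous C) (hKneg : ∀ t, K t < 0)
    (hf : ContDiff ℝ 2 f)
    (hode : ∀ t, deriv (deriv f) t - C t * deriv f t + K t * f t = 0)
    (h0 : f 0 = 0) (h0' : deriv f 0 = -1) :
    ∀ t, deriv f t ≠ 0 := by
  intro t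
  rcases le_or_gt 0 t with ht | ht
  · exact finsler_aux K C f hKneg hf hode h0 h0' t ht
  · -- reflect: g s = -f(-s)
    set g : ℝ → ℝ := fun s => -f (-s) with hg
    have hgc : ContDiff ℝ 2 g := (hf.comp (contDiff_neg)).neg
    have hdg : deriv g = fun s => deriv f (-s) := by
      funext s
      rw [hg]
      have : deriv (fun s : ℝ => -f (-s)) s = -deriv (fun s : ℝ => f (-s)) s := deriv.neg
      rw [this, deriv_comp_neg]
      ring
    have hddg : ∀ s, deriv (deriv g) s = -deriv (deriv f) (-s) := by
      intro s
      rw [hdg, deriv_comp_neg]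
    have hodeg : ∀ s, deriv (deriv g) s - (fun s => -C (-s)) s * deriv g s
        + (fun s => K (-s)) s * g s = 0 := by
      intro s
      rw [hddg, hdg]
      simp only [hg]
      have := hode (-s)
      ring_nf
      ring_nf at this
      linarith
    have hg0 : g 0 = 0 := by simp [hg, h0]
    have hg0' : deriv g 0 = -1 := by rw [hdg]; simpa using h0'
    have := finsler_aux (fun s => K (-s)) (fun s => -C (-s)) g
      (fun s => hKneg (-s)) hgc hodeg hg0 hg0' (-t) (by linarith)
    rw [hdg] at this
    simpa using this
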